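/- Let (x_n) be an absolutely summable sequence of complex numbers and (ϑ_n) a sequence of nonnegative reals with partial sums φ_n = ∑_{m=0}^{n} ϑ_m satisfying φ_n → ∞. Then e^{−φ_n} ∑_{m=0}^{n} x_m e^{φ_m} → 0 as n → ∞. -/

import Mathlib

open Filter Finset

/-- Weighted limit with exponentially growing weights: if `(x_n)` is absolutely
summable, `ϑ_n ≥ 0`, and `φ_n = ∑_{m=0}^{n} ϑ_m → ∞`, then
`e^{−φ_n} ∑_{m=0}^{n} x_m e^{φ_m} → 0`. -/
theorem weighted_exp_limit (x : ℕ → ℂ) (hx : Summable fun n => ‖x n‖)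
    (ϑ : ℕ → ℝ) (hϑ : ∀ n, 0 ≤ ϑ n)
    (φ : ℕ → ℝ) (hφ : ∀ n, φ n = ∑ m ∈ Finset.range (n + 1), ϑ m)
    (hphiTop : Tendsto φ atTop atTop) :
    Tendsto (fun n : ℕ =>
        (Real.exp (-φ n) : ℂ) * ∑ m ∈ Finset.range (n + 1), x m * Real.exp (φ m))
      atTop (nhds 0) := by
  have hmono : ∀ m n : ℕ, m ≤ n → φ m ≤ φ n := by
    intro m n hmn
    rw [hφ, hφ]
    exact Finset.sum_le_sum_of_subset_of_nonneg
      (Finset.range_subset_range.mpr (by omega)) (fun i _ _ => hϑ i)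
  set F : ℕ → ℕ → ℂ := fun n m =>
    if m ≤ n then x m * (Real.exp (φ m - φ n) : ℂ) else 0 with hF
  have key : Tendsto (fun n => ∑' m, F n m) atTop (nhds (∑' m : ℕ, (0 : ℂ))) := by
    apply tendsto_tsum_of_dominated_convergence hx
    · intro m
      have h1 : Tendsto (fun n => Real.exp (φ m - φ n)) atTop (nhds 0) := by
        simp only [sub_eq_add_neg, Real.exp_add]
        have := Real.tendsto_exp_neg_atTop_nhds_zero.comp hphiTop
        simpa using this.const_mul (Real.exp (φ m))
      have h2 : Tendsto (fun n => x m * (Real.exp (φ m - φ n) : ℂ)) atTop (nhds 0) := by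
        have := ((Complex.continuous_ofReal.tendsto 0).comp h1).const_mul (x m)
        simpa using this
      apply h2.congr'
      filter_upwards [eventually_ge_atTop m] with n hn
      simp [hF, hn]
    · apply Eventually.of_forall
      intro n m
      by_cases hmn : m ≤ n
      · simp only [hF, if_pos hmn, norm_mul, Complex.norm_real, Real.norm_eq_abs,
          abs_of_nonneg (Real.exp_nonneg _)]
        have : Real.exp (φ m - φ n) ≤ 1 := by
          rw [Real.exp_le_one_iff]
          linarith [hmono m n hmn]
        calc ‖x m‖ * Real.exp (φ m - φ n) ≤ ‖x m‖ * 1 :=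
              mul_le_mul_of_nonneg_left this (norm_nonneg _)
          _ = ‖x m‖ := mul_one _
      · simp [hF, hmn, norm_nonneg]
  simp only [tsum_zero] at key
  apply key.congr
  intro n
  rw [tsum_eq_sum (s := Finset.range (n + 1)) (fun m hm => by
      have : ¬ m ≤ n := by simpa [Nat.lt_succ_iff] using hm
      simp [hF, this])]
  rw [Finset.mul_sum]
  apply Finset.sum_congr rfl
  intro m hm
  have hmn : m ≤ n := by simpa [Nat.lt_succ_iff] using Finset.mem_range.mp hm
  simp only [hF, if_pos hmn]
  rw [sub_eq_add_neg, Real.exp_add, Complex.ofReal_mul]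
  ring
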